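/- For irrational β > 2 and α = β/(β-1), no Nim-type move (decreasing exactly one coordinate by a positive amount) maps a pair (⌊nα⌋, ⌊nβ⌋) to a pair of the form (⌊mα⌋, ⌊mβ⌋) or (⌊mβ⌋, ⌊mα⌋) for nonnegative integers m, n. -/

import Mathlib

lemma floorMulInj (γ : ℝ) (hγ : 1 < γ) {n m : ℕ}
    (h : ⌊(n : ℝ) * γ⌋ = ⌊(m : ℝ) * γ⌋) : n = m := by
  by_contra hne
  have key : ∀ a b : ℕ, a < b → ⌊(a : ℝ) * γ⌋ < ⌊(b : ℝ) * γ⌋ := by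
    intro a b hab
    have hab' : (a : ℝ) + 1 ≤ b := by exact_mod_cast hab
    have h1 : (a : ℝ) * γ + 1 ≤ (b : ℝ) * γ := by nlinarith [show (0:ℝ) ≤ (a:ℝ) by positivity]
    calc ⌊(a : ℝ) * γ⌋ < ⌊(a : ℝ) * γ⌋ + 1 := by omega
    _ = ⌊(a : ℝ) * γ + 1⌋ := by
        rw [show ((a : ℝ) * γ + 1) = (a : ℝ) * γ + (1 : ℤ) by push_cast; ring,
          Int.floor_add_intCast]
    _ ≤ ⌊(b : ℝ) * γ⌋ := Int.floor_le_floor h1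
  rcases lt_or_gt_of_ne hne with hlt | hlt
  · exact absurd h (ne_of_lt (key _ _ hlt))
  · exact absurd h.symm (ne_of_lt (key _ _ hlt))

lemma beattyNe (α β : ℝ) (hαpos : 0 < α) (hβpos : 0 < β)
    (hsum : 1 / α + 1 / β = 1)
    (hirrα : Irrational α) (hirrβ : Irrational β) {n m : ℕ}
    (hn : n ≠ 0) (hm : m ≠ 0) : ⌊(n : ℝ) * α⌋ ≠ ⌊(m : ℝ) * β⌋ := by
  intro h
  have hiα : Irrational ((n : ℝ) * α) := hirrα.natCast_mul hn
  have hiβ : Irrational ((m : ℝ) * β) := hirrβ.natCast_mul hm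
  set k : ℤ := ⌊(n : ℝ) * α⌋ with hk
  have h1 : (k : ℝ) < (n : ℝ) * α :=
    lt_of_le_of_ne (Int.floor_le _) (Ne.symm (hiα.ne_int k))
  have h2 : (n : ℝ) * α < k + 1 := Int.lt_floor_add_one _
  have h3 : (k : ℝ) < (m : ℝ) * β := by
    rw [h]; exact lt_of_le_of_ne (Int.floor_le _) (Ne.symm (hiβ.ne_int _))
  have h4 : (m : ℝ) * β < k + 1 := by rw [h]; exact Int.lt_floor_add_one _
  have e1 : (k : ℝ) / α < n := (div_lt_iff₀ hαpos).2 (by linarith)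
  have e2 : (n : ℝ) < (k + 1) / α := (lt_div_iff₀ hαpos).2 (by linarith)
  have e3 : (k : ℝ) / β < m := (div_lt_iff₀ hβpos).2 (by linarith)
  have e4 : (m : ℝ) < (k + 1) / β := (lt_div_iff₀ hβpos).2 (by linarith)
  have s1 : (k : ℝ) / α + k / β = k := by
    have := congrArg (fun x => (k : ℝ) * x) hsum
    simpa [mul_add, mul_one_div, div_eq_mul_inv] using this
  have s2 : ((k : ℝ) + 1) / α + (k + 1) / β = k + 1 := by
    have := congrArg (fun x => ((k : ℝ) + 1) * x) hsum
    simpa [mul_add, mul_one_div, div_eq_mul_inv] using this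
  have f1 : (k : ℝ) < (n + m : ℕ) := by push_cast; linarith
  have f2 : ((n + m : ℕ) : ℝ) < k + 1 := by push_cast; linarith
  have g1 : k < ((n + m : ℕ) : ℤ) := by exact_mod_cast f1
  have g2 : ((n + m : ℕ) : ℤ) < k + 1 := by exact_mod_cast f2
  omega

/-- No Nim-type move (decreasing exactly one coordinate by a positive amount,
keeping it nonnegative) maps `(⌊nα⌋, ⌊nβ⌋)` to a candidate P-position. -/
theorem stmt_7 (β : ℝ) (hirr : Irrational β) (hβ : 2 < β)
    (α : ℝ) (hα : α = β / (β - 1)) :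
    ∀ n m : ℕ, ∀ t : ℤ, 0 < t →
      (t ≤ ⌊(n : ℝ) * α⌋ →
        ¬((⌊(n : ℝ) * α⌋ - t, ⌊(n : ℝ) * β⌋) = (⌊(m : ℝ) * α⌋, ⌊(m : ℝ) * β⌋) ∨
          (⌊(n : ℝ) * α⌋ - t, ⌊(n : ℝ) * β⌋) = (⌊(m : ℝ) * β⌋, ⌊(m : ℝ) * α⌋))) ∧
      (t ≤ ⌊(n : ℝ) * β⌋ →
        ¬((⌊(n : ℝ) * α⌋, ⌊(n : ℝ) * β⌋ - t) = (⌊(m : ℝ) * α⌋, ⌊(m : ℝ) * β⌋) ∨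
          (⌊(n : ℝ) * α⌋, ⌊(n : ℝ) * β⌋ - t) = (⌊(m : ℝ) * β⌋, ⌊(m : ℝ) * α⌋))) := by
  have hβ0 : (0 : ℝ) < β - 1 := by linarith
  have hβ0' : (0 : ℝ) < β := by linarith
  have hα1 : 1 < α := by rw [hα, lt_div_iff₀ hβ0]; linarith
  have hα2 : α < 2 := by rw [hα, div_lt_iff₀ hβ0]; linarith
  have hαβ : α ≤ β := by linarith
  have hsum : 1 / α + 1 / β = 1 := by
    rw [hα]; field_simp; ring
  have hirrα : Irrational α := by
    have h1 : Irrational (β - 1) := by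
      have := hirr.sub_intCast 1; simpa using this
    have h2 : Irrational (β - 1)⁻¹ := h1.inv
    have h3 : Irrational (1 + (β - 1)⁻¹) := by
      have := h2.intCast_add 1; simpa using this
    have : α = 1 + (β - 1)⁻¹ := by
      rw [hα]; field_simp; ring
    rwa [this]
  intro n m t ht
  have hflr : ∀ p : ℕ, ⌊(p : ℝ) * α⌋ ≤ ⌊(p : ℝ) * β⌋ := fun p =>
    Int.floor_le_floor (mul_le_mul_of_nonneg_left hαβ p.cast_nonneg)
  constructor
  · intro _ hcase
    rcases hcase with h | h
    · have h1 := congrArg Prod.fst h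
      have h2 := congrArg Prod.snd h
      simp only at h1 h2
      have : n = m := floorMulInj β (by linarith) h2
      subst this; omega
    · have h1 := congrArg Prod.fst h
      have h2 := congrArg Prod.snd h
      simp only at h1 h2
      have a1 := hflr n
      have a2 := hflr m
      omega
  · intro _ hcase
    rcases hcase with h | h
    · have h1 := congrArg Prod.fst h
      have h2 := congrArg Prod.snd h
      simp only at h1 h2
      have : n = m := floorMulInj α hα1 h1
      subst this; omega
    · have h1 := congrArg Prod.fst h
      have h2 := congrArg Prod.snd h
      simp only at h1 h2
      rcases Nat.eq_zero_or_pos n with hn | hn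
      · subst hn
        rcases Nat.eq_zero_or_pos m with hm | hm
        · subst hm; simp only [Nat.cast_zero, zero_mul, Int.floor_zero] at h1 h2; omega
        · have : (2 : ℝ) ≤ (m : ℝ) * β := by
            have : (1 : ℝ) ≤ m := by exact_mod_cast hm
            nlinarith
          have : (2 : ℤ) ≤ ⌊(m : ℝ) * β⌋ := by
            have := Int.le_floor.2 (by exact_mod_cast this : ((2 : ℤ) : ℝ) ≤ (m : ℝ) * β)
            exact this
          simp only [Nat.cast_zero, zero_mul, Int.floor_zero] at h1; omega
      · rcases Nat.eq_zero_or_pos m with hm | hm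
        · subst hm
          have : (1 : ℝ) ≤ (n : ℝ) * α := by
            have : (1 : ℝ) ≤ n := by exact_mod_cast hn
            nlinarith
          have : (1 : ℤ) ≤ ⌊(n : ℝ) * α⌋ :=
            Int.le_floor.2 (by exact_mod_cast this)
          simp only [Nat.cast_zero, zero_mul, Int.floor_zero] at h1; omega
        · exact beattyNe α β (by linarith) hβ0' hsum hirrα hirr
            (Nat.pos_iff_ne_zero.mp hn) (Nat.pos_iff_ne_zero.mp hm) h1
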